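/- Let Γ be a group, H a complex Hilbert space, and σ : Γ × Γ → ℂ a function with |σ(γ,γ')| = 1 for all γ, γ'. Let a : Γ → B(H) be a family of bounded operators on H such that each a(γ) is a compact operator and Σ_{γ∈Γ} ‖a(γ)‖ < ∞. Then: (1) for every f in the Hilbert space ℓ²(Γ;H) of square-summable H-valued functions on Γ and every γ' ∈ Γ, the series Σ_{γ∈Γ} conj(σ(γ,γ⁻¹γ'))·a(γ)(f(γ⁻¹γ')) converges in H, and the resulting function γ' ↦ (Af)(γ') defines a bounded linear operator A on ℓ²(Γ;H); (2) ‖A‖ ≤ Σ_{γ} ‖a(γ)‖; (3) A lies in the operator-norm closure of the set of operators of the same form associated to finitely supported families Γ → B(H) of compact operators. -/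

import Mathlib

open scoped ENNReal

set_option maxHeartbeats 1000000

section Aux

variable {Γ : Type*} [Group Γ] {H : Type*}
    [NormedAddCommGroup H] [InnerProductSpace ℂ H] [CompleteSpace H]

private lemma twoReal : ((2 : ℝ≥0∞).toReal) = (2 : ℝ) := by norm_num

private lemma twisted_memℓp (c : H →L[ℂ] H) (m : Γ → ℂ) (hm : ∀ γ, ‖m γ‖ = 1) (γ₀ : Γ)
    (f : lp (fun _ : Γ => H) 2) :
    Memℓp (fun γ' : Γ => m γ' • c (f (γ₀⁻¹ * γ'))) 2 := by
  apply memℓp_gen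
  have hsf : Summable fun γ' : Γ => ‖f γ'‖ ^ ((2 : ℝ≥0∞).toReal) :=
    (lp.memℓp f).summable (by rw [twoReal]; norm_num)
  have hcomp : Summable fun γ' : Γ => ‖f (γ₀⁻¹ * γ')‖ ^ ((2 : ℝ≥0∞).toReal) :=
    (Equiv.mulLeft γ₀⁻¹).summable_iff.mpr hsf
  have hbig : Summable fun γ' : Γ =>
      ‖c‖ ^ ((2 : ℝ≥0∞).toReal) * ‖f (γ₀⁻¹ * γ')‖ ^ ((2 : ℝ≥0∞).toReal) :=
    hcomp.mul_left _
  refine hbig.of_nonneg_of_le (fun γ' => Real.rpow_nonneg (norm_nonneg _) _) fun γ' => ?_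
  rw [← Real.mul_rpow (norm_nonneg _) (norm_nonneg _)]
  refine Real.rpow_le_rpow (norm_nonneg _) ?_ (by rw [twoReal]; norm_num)
  rw [norm_smul, hm, one_mul]
  exact (c.le_opNorm _)

private lemma twisted_norm_le (c : H →L[ℂ] H) (m : Γ → ℂ) (hm : ∀ γ, ‖m γ‖ = 1) (γ₀ : Γ)
    (f : lp (fun _ : Γ => H) 2) :
    ‖(⟨fun γ' : Γ => m γ' • c (f (γ₀⁻¹ * γ')), twisted_memℓp c m hm γ₀ f⟩ :
      lp (fun _ : Γ => H) 2)‖ ≤ ‖c‖ * ‖f‖ := by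
  have h2 : (0:ℝ) < (2 : ℝ≥0∞).toReal := by rw [twoReal]; norm_num
  refine lp.norm_le_of_tsum_le h2 (mul_nonneg (norm_nonneg _) (norm_nonneg _)) ?_
  have hsf : Summable fun γ' : Γ => ‖f γ'‖ ^ ((2 : ℝ≥0∞).toReal) :=
    (lp.memℓp f).summable h2
  have hcomp : Summable fun γ' : Γ => ‖f (γ₀⁻¹ * γ')‖ ^ ((2 : ℝ≥0∞).toReal) :=
    (Equiv.mulLeft γ₀⁻¹).summable_iff.mpr hsf
  have hbig : Summable fun γ' : Γ =>
      ‖c‖ ^ ((2 : ℝ≥0∞).toReal) * ‖f (γ₀⁻¹ * γ')‖ ^ ((2 : ℝ≥0∞).toReal) :=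
    hcomp.mul_left _
  have hle : ∀ γ' : Γ,
      ‖m γ' • c (f (γ₀⁻¹ * γ'))‖ ^ ((2 : ℝ≥0∞).toReal) ≤
        ‖c‖ ^ ((2 : ℝ≥0∞).toReal) * ‖f (γ₀⁻¹ * γ')‖ ^ ((2 : ℝ≥0∞).toReal) := by
    intro γ'
    rw [← Real.mul_rpow (norm_nonneg _) (norm_nonneg _)]
    refine Real.rpow_le_rpow (norm_nonneg _) ?_ h2.le
    rw [norm_smul, hm, one_mul]
    exact c.le_opNorm _
  have hsmall : Summable fun γ' : Γ =>
      ‖m γ' • c (f (γ₀⁻¹ * γ'))‖ ^ ((2 : ℝ≥0∞).toReal) := by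
    exact hbig.of_nonneg_of_le (fun γ' => Real.rpow_nonneg (norm_nonneg _) _) hle
  calc (∑' γ' : Γ, ‖m γ' • c (f (γ₀⁻¹ * γ'))‖ ^ ((2 : ℝ≥0∞).toReal))
      ≤ ∑' γ' : Γ, ‖c‖ ^ ((2 : ℝ≥0∞).toReal) * ‖f (γ₀⁻¹ * γ')‖ ^ ((2 : ℝ≥0∞).toReal) :=
        Summable.tsum_le_tsum hle hsmall hbig
    _ = ‖c‖ ^ ((2 : ℝ≥0∞).toReal) *
          ∑' γ' : Γ, ‖f (γ₀⁻¹ * γ')‖ ^ ((2 : ℝ≥0∞).toReal) := tsum_mul_left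
    _ = ‖c‖ ^ ((2 : ℝ≥0∞).toReal) * ∑' γ' : Γ, ‖f γ'‖ ^ ((2 : ℝ≥0∞).toReal) := by
        congr 1
        simpa using (Equiv.mulLeft γ₀⁻¹).tsum_eq
          (fun γ' : Γ => ‖f γ'‖ ^ ((2 : ℝ≥0∞).toReal))
    _ = ‖c‖ ^ ((2 : ℝ≥0∞).toReal) * ‖f‖ ^ ((2 : ℝ≥0∞).toReal) := by
        rw [lp.norm_rpow_eq_tsum h2]
    _ = (‖c‖ * ‖f‖) ^ ((2 : ℝ≥0∞).toReal) :=
        (Real.mul_rpow (norm_nonneg _) (norm_nonneg _)).symm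

private lemma twisted_aux (c : H →L[ℂ] H) (m : Γ → ℂ) (hm : ∀ γ, ‖m γ‖ = 1) (γ₀ : Γ) :
    ∃ S : lp (fun _ : Γ => H) 2 →L[ℂ] lp (fun _ : Γ => H) 2,
      ‖S‖ ≤ ‖c‖ ∧ ∀ (f : lp (fun _ : Γ => H) 2) (γ' : Γ),
        S f γ' = m γ' • c (f (γ₀⁻¹ * γ')) := by
  set L : lp (fun _ : Γ => H) 2 →ₗ[ℂ] lp (fun _ : Γ => H) 2 :=
    { toFun := fun f => ⟨fun γ' : Γ => m γ' • c (f (γ₀⁻¹ * γ')), twisted_memℓp c m hm γ₀ f⟩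
      map_add' := fun f g => by
        apply lp.ext
        funext γ'
        simp [lp.coeFn_add, Pi.add_apply, smul_add]
        rfl
      map_smul' := fun r f => by
        apply lp.ext
        funext γ'
        simp [lp.coeFn_smul, Pi.smul_apply, smul_comm r] } with hL
  refine ⟨L.mkContinuous ‖c‖ (fun f => twisted_norm_le c m hm γ₀ f),
    L.mkContinuous_norm_le (norm_nonneg c) _, fun f γ' => rfl⟩

/-- Evaluation at a point as a continuous linear map on `ℓ²`. -/
private noncomputable def evalCLM (γ' : Γ) : lp (fun _ : Γ => H) 2 →L[ℂ] H :=
  LinearMap.mkContinuous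
    { toFun := fun f => f γ'
      map_add' := fun f g => by simp [lp.coeFn_add]
      map_smul' := fun r f => by simp [lp.coeFn_smul] } 1
    (fun f => by rw [one_mul]; exact lp.norm_apply_le_norm two_ne_zero f γ')

end Aux

/-- **Twisted convolution operators with summable compact coefficients** (analogue of
Lemma D1). Let `σ : Γ × Γ → ℂ` be unimodular and `a : Γ → B(H)` a family of compact
operators with `Σ_γ ‖a(γ)‖ < ∞`. Then the twisted-convolution series
`(Af)(γ') = Σ_γ conj(σ(γ, γ⁻¹γ')) a(γ)(f(γ⁻¹γ'))` converges for every `f ∈ ℓ²(Γ; H)`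
and every `γ'`, defines a bounded operator `A` on `ℓ²(Γ; H)` with
`‖A‖ ≤ Σ_γ ‖a(γ)‖`, and `A` lies in the norm closure of the set of operators of the same
form associated to finitely supported families of compact operators. -/
theorem twisted_convolution_summable {Γ : Type*} [Group Γ] {H : Type*}
    [NormedAddCommGroup H] [InnerProductSpace ℂ H] [CompleteSpace H]
    (σ : Γ → Γ → ℂ) (hσ : ∀ γ γ' : Γ, ‖σ γ γ'‖ = 1)
    (a : Γ → H →L[ℂ] H)
    (hacpt : ∀ γ : Γ, IsCompactOperator (a γ))
    (hasum : Summable fun γ : Γ => ‖a γ‖) :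
    ∃ A : lp (fun _ : Γ => H) 2 →L[ℂ] lp (fun _ : Γ => H) 2,
      (∀ (f : lp (fun _ : Γ => H) 2) (γ' : Γ),
        HasSum (fun γ : Γ => (starRingEnd ℂ) (σ γ (γ⁻¹ * γ')) • a γ (f (γ⁻¹ * γ')))
          (A f γ')) ∧
      ‖A‖ ≤ ∑' γ : Γ, ‖a γ‖ ∧
      A ∈ closure {B : lp (fun _ : Γ => H) 2 →L[ℂ] lp (fun _ : Γ => H) 2 |
        ∃ b : Γ → H →L[ℂ] H, (Function.support b).Finite ∧
          (∀ γ : Γ, IsCompactOperator (b γ)) ∧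
          ∀ (f : lp (fun _ : Γ => H) 2) (γ' : Γ),
            HasSum (fun γ : Γ => (starRingEnd ℂ) (σ γ (γ⁻¹ * γ')) • b γ (f (γ⁻¹ * γ')))
              (B f γ')} := by
  classical
  -- individual twisted translation operators, one for each coefficient operator
  have hT : ∀ c : H →L[ℂ] H, ∀ γ₀ : Γ,
      ∃ S : lp (fun _ : Γ => H) 2 →L[ℂ] lp (fun _ : Γ => H) 2,
        ‖S‖ ≤ ‖c‖ ∧ ∀ (f : lp (fun _ : Γ => H) 2) (γ' : Γ),
          S f γ' = (starRingEnd ℂ) (σ γ₀ (γ₀⁻¹ * γ')) • c (f (γ₀⁻¹ * γ')) := by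
    intro c γ₀
    exact twisted_aux c (fun γ' => (starRingEnd ℂ) (σ γ₀ (γ₀⁻¹ * γ')))
      (fun γ' => by simp [hσ]) γ₀
  choose T hTnorm hTspec using fun γ₀ => hT (a γ₀) γ₀
  have hTsum : Summable fun γ => ‖T γ‖ :=
    hasum.of_nonneg_of_le (fun γ => norm_nonneg _) hTnorm
  have hTsum' : Summable T := hTsum.of_norm
  obtain ⟨A, hA⟩ := hTsum'
  -- pointwise sums
  have hptsum : ∀ (f : lp (fun _ : Γ => H) 2) (γ' : Γ),
      HasSum (fun γ : Γ => (starRingEnd ℂ) (σ γ (γ⁻¹ * γ')) • a γ (f (γ⁻¹ * γ')))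
        (A f γ') := by
    intro f γ'
    have h1 : HasSum (fun γ => T γ f) (A f) :=
      hA.mapL (ContinuousLinearMap.apply ℂ (lp (fun _ : Γ => H) 2) f)
    have h2 : HasSum (fun γ => (evalCLM γ' : lp (fun _ : Γ => H) 2 →L[ℂ] H) (T γ f))
        ((evalCLM γ' : lp (fun _ : Γ => H) 2 →L[ℂ] H) (A f)) := h1.mapL _
    have heq : (fun γ => (evalCLM γ' : lp (fun _ : Γ => H) 2 →L[ℂ] H) (T γ f)) =
        fun γ : Γ => (starRingEnd ℂ) (σ γ (γ⁻¹ * γ')) • a γ (f (γ⁻¹ * γ')) := by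
      funext γ
      exact hTspec γ f γ'
    rw [heq] at h2
    exact h2
  refine ⟨A, hptsum, ?_, ?_⟩
  · -- norm bound
    calc ‖A‖ = ‖∑' γ, T γ‖ := by rw [hA.tsum_eq]
      _ ≤ ∑' γ, ‖T γ‖ := norm_tsum_le_tsum_norm hTsum
      _ ≤ ∑' γ, ‖a γ‖ := Summable.tsum_le_tsum hTnorm hTsum hasum
  · -- closure membership
    refine mem_closure_of_tendsto hA (Filter.Eventually.of_forall fun s => ?_)
    refine ⟨fun γ => if γ ∈ s then a γ else 0, ?_, ?_, ?_⟩
    · refine s.finite_toSet.subset fun γ hγ => ?_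
      by_contra hγs
      exact hγ (if_neg hγs)
    · intro γ
      by_cases hγ : γ ∈ s
      · simpa [hγ] using hacpt γ
      · simpa [hγ] using isCompactOperator_zero
    · intro f γ'
      have hzero : ∀ γ ∉ s,
          (starRingEnd ℂ) (σ γ (γ⁻¹ * γ')) •
            (if γ ∈ s then a γ else 0) (f (γ⁻¹ * γ')) = 0 := by
        intro γ hγ
        simp [hγ]
      have := hasSum_sum_of_ne_finset_zero (s := s) (L := SummationFilter.unconditional Γ) hzero
      convert this using 1
      have : ((∑ γ ∈ s, T γ) f) = ∑ γ ∈ s, T γ f := by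
        simp [ContinuousLinearMap.sum_apply]
      rw [this]
      have hcoe : (∑ γ ∈ s, T γ f : lp (fun _ : Γ => H) 2) γ' =
          ∑ γ ∈ s, T γ f γ' := by
        rw [lp.coeFn_sum]
        simp
      rw [hcoe]
      refine Finset.sum_congr rfl fun γ hγ => ?_
      rw [hTspec γ f γ', if_pos hγ]
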